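/- For any bay configuration B, if a container r that is blocking the current target container is relocated to column c_i, then the number of blocking containers in the resulting bay B' satisfies S_0(B') = S_0(B) - 1 if r is smaller than the minimum container index in c_i, and S_0(B') = S_0(B) otherwise. Consequently, S_0(B') >= S_0(B) - 1. -/

import Mathlib

abbrev Bay (C : ℕ) := Fin C → List ℕ

def S0col : List ℕ → ℕ
  | [] => 0
  | a :: rest => (if rest.any (fun b => decide (b < a)) then 1 else 0) + S0col rest

def S0 {C : ℕ} (B : Bay C) : ℕ := ∑ i : Fin C, S0col (B i)

def bayMem {C : ℕ} (x : ℕ) (B : Bay C) : Prop := ∃ i, x ∈ B i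

/-- relocating the topmost blocking container `r` (which lies above the
target `t`, the smallest container of the bay) from column `c` to column `i` decreases
the number of blocking containers `S0` by one exactly when `r` is smaller than the
minimum of column `i` (an empty column counts as having infinite minimum), and leaves
it unchanged otherwise.  Consequently `S0 B' ≥ S0 B - 1`. -/
theorem stmt0 {C : ℕ} (B : Bay C) (c i : Fin C) (hic : i ≠ c) (r : ℕ) (rest : List ℕ)
    (hc : B c = r :: rest)
    (t : ℕ) (ht : t ∈ rest) (htmin : ∀ x, bayMem x B → t ≤ x) (htr : t < r)
    (hnodup : ((List.finRange C).flatMap B).Nodup)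
    (B' : Bay C)
    (hB' : B' = fun j => if j = c then rest else if j = i then r :: B j else B j) :
    (S0 B' = if ∀ b ∈ B i, r < b then S0 B - 1 else S0 B) ∧ S0 B ≤ S0 B' + 1 := by
  have hci : c ≠ i := fun h => hic h.symm
  -- disjointness of columns i and c
  have hdisj : ∀ x, x ∈ B i → x ∈ B c → False := by
    obtain ⟨-, hp⟩ := List.nodup_flatMap.mp hnodup
    have hsym : Symmetric (Function.onFun List.Disjoint B) := fun a b h => h.symm
    haveI : Std.Symm (Function.onFun List.Disjoint B) := ⟨fun a b h => hsym h⟩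
    have := hp.forall (List.mem_finRange i) (List.mem_finRange c) hic
    exact fun x hxi hxc => this hxi hxc
  -- rewrite B' as a double update
  have hB'u : B' = Function.update (Function.update B c rest) i (r :: B i) := by
    funext j
    rcases eq_or_ne j i with rfl | hji
    · simp [hB', Function.update, hic]
    · rcases eq_or_ne j c with rfl | hjc
      · simp [hB', Function.update, hji]
      · simp [hB', Function.update, hji, hjc]
  have hmemc : c ∈ (Finset.univ : Finset (Fin C)) \ {i} := by
    simp [hci]
  -- compute S0 B'
  have hS0' : S0 B' = S0col (r :: B i) + S0col rest +
      ∑ j ∈ ((Finset.univ : Finset (Fin C)) \ {i}) \ {c}, S0col (B j) := by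
    rw [S0, hB'u]
    rw [show (fun j => S0col (Function.update (Function.update B c rest) i (r :: B i) j))
        = Function.update (fun j => S0col (Function.update B c rest j)) i
          (S0col (r :: B i)) from ?_]
    · rw [Finset.sum_update_of_mem (Finset.mem_univ i)]
      rw [show (fun j => S0col (Function.update B c rest j))
          = Function.update (fun j => S0col (B j)) c (S0col rest) from ?_]
      · rw [Finset.sum_update_of_mem hmemc, add_assoc]
      · funext j
        rcases eq_or_ne j c with rfl | hjc
        · simp [Function.update]
        · simp [Function.update, hjc]
    · funext j
      rcases eq_or_ne j i with rfl | hji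
      · simp [Function.update]
      · simp [Function.update, hji]
  -- compute S0 B
  have hS0 : S0 B = S0col (B i) + S0col (B c) +
      ∑ j ∈ ((Finset.univ : Finset (Fin C)) \ {i}) \ {c}, S0col (B j) := by
    rw [S0, Finset.sum_eq_add_sum_sdiff_singleton_of_mem (Finset.mem_univ i),
      Finset.sum_eq_add_sum_sdiff_singleton_of_mem hmemc, add_assoc]
  have hcol_c : S0col (B c) = 1 + S0col rest := by
    rw [hc, S0col]
    have : rest.any (fun b => decide (b < r)) = true := by
      simp only [List.any_eq_true, decide_eq_true_eq]
      exact ⟨t, ht, htr⟩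
    rw [this]
    simp
  by_cases h : ∀ b ∈ B i, r < b
  · have hcol_i : S0col (r :: B i) = S0col (B i) := by
      rw [S0col]
      have : (B i).any (fun b => decide (b < r)) = false := by
        simp only [List.any_eq_false, decide_eq_true_eq]
        intro b hb
        exact Nat.not_lt.mpr (Nat.le_of_lt (h b hb))
      rw [this]
      simp
    rw [if_pos h]
    omega
  · push_neg at h
    obtain ⟨b, hb, hbr⟩ := h
    have hbne : b ≠ r := by
      intro hbr'
      exact hdisj b hb (hbr' ▸ (hc ▸ (List.mem_cons_self : r ∈ r :: rest)))
    have hblt : b < r := lt_of_le_of_ne hbr hbne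
    have hcol_i : S0col (r :: B i) = 1 + S0col (B i) := by
      rw [S0col]
      have : (B i).any (fun b => decide (b < r)) = true := by
        simp only [List.any_eq_true, decide_eq_true_eq]
        exact ⟨b, hb, hblt⟩
      rw [this]
      simp
    rw [if_neg (by push_neg; exact ⟨b, hb, hbr⟩)]
    omega
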